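/- For the 4×10 matrices A^(0), A^(1), A^(2), A^(3) defining the linearized compressible Euler operator, the matrix 𝔸(w) = w_0 A^(0) + w_1 A^(1) + w_2 A^(2) + w_3 A^(3) has rank exactly 4 for every unit vector w ∈ ℝ⁴ (indeed for every nonzero w ∈ ℝ⁴). -/

import Mathlib

open Matrix

/-- The four 4×10 matrices of the linearized compressible Euler operator. -/
def AL : Fin 4 → Matrix (Fin 4) (Fin 10) ℝ
  | 0 => !![1,0,0,0,0,0,0,0,0,0;
            0,1,0,0,0,0,0,0,0,0;
            0,0,1,0,0,0,0,0,0,0;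
            0,0,0,1,0,0,0,0,0,0]
  | 1 => !![0,1,0,0,0,0,0,0,0,0;
            0,0,0,0,1,0,0,0,0,1;
            0,0,0,0,0,1,0,0,0,0;
            0,0,0,0,0,0,1,0,0,0]
  | 2 => !![0,0,1,0,0,0,0,0,0,0;
            0,0,0,0,0,1,0,0,0,0;
            0,0,0,0,0,0,0,1,0,1;
            0,0,0,0,0,0,0,0,1,0]
  | 3 => !![0,0,0,1,0,0,0,0,0,0;
            0,0,0,0,0,0,1,0,0,0;
            0,0,0,0,0,0,0,0,1,0;
            0,0,0,0,-1,0,0,-1,0,1]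

/-- The symbol matrix written explicitly. -/
def symbolM (a b c d : ℝ) : Matrix (Fin 4) (Fin 10) ℝ :=
  !![a,b,c,d,0,0,0,0,0,0;
     0,a,0,0,b,c,d,0,0,b;
     0,0,a,0,0,b,0,c,d,c;
     0,0,0,a,-d,0,b,-d,c,d]

/-- The Gram matrix 𝔸(w) 𝔸(w)ᵀ written explicitly. -/
def gramM (a b c d : ℝ) : Matrix (Fin 4) (Fin 4) ℝ :=
  !![a^2+b^2+c^2+d^2, a*b, a*c, a*d;
     a*b, a^2+2*b^2+c^2+d^2, 2*b*c, b*d;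
     a*c, 2*b*c, a^2+b^2+2*c^2+d^2, c*d;
     a*d, b*d, c*d, a^2+b^2+c^2+3*d^2]

set_option maxHeartbeats 2000000 in
lemma sum_AL_eq (w : Fin 4 → ℝ) :
    (∑ i : Fin 4, w i • AL i) = symbolM (w 0) (w 1) (w 2) (w 3) := by
  simp [Fin.sum_univ_four, AL, symbolM, Matrix.smul_of, Matrix.smul_cons, Matrix.smul_empty,
    Matrix.of_add_of, Matrix.cons_add_cons, Matrix.empty_add_empty, smul_eq_mul]

set_option maxHeartbeats 4000000 in
lemma symbol_mul_transpose (a b c d : ℝ) :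
    symbolM a b c d * (symbolM a b c d)ᵀ = gramM a b c d := by
  ext i j
  fin_cases i <;> fin_cases j <;>
    simp [symbolM, gramM, Matrix.mul_apply, Matrix.transpose_apply, Matrix.vecHead, Matrix.vecTail, Function.comp, Fin.sum_univ_succ] <;> ring

set_option maxHeartbeats 1000000 in
lemma det_fin_four' (A : Matrix (Fin 4) (Fin 4) ℝ) :
    A.det =
      A 0 0 * (A 1 1 * A 2 2 * A 3 3 - A 1 1 * A 2 3 * A 3 2 - A 1 2 * A 2 1 * A 3 3
        + A 1 2 * A 2 3 * A 3 1 + A 1 3 * A 2 1 * A 3 2 - A 1 3 * A 2 2 * A 3 1)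
      - A 0 1 * (A 1 0 * A 2 2 * A 3 3 - A 1 0 * A 2 3 * A 3 2 - A 1 2 * A 2 0 * A 3 3
        + A 1 2 * A 2 3 * A 3 0 + A 1 3 * A 2 0 * A 3 2 - A 1 3 * A 2 2 * A 3 0)
      + A 0 2 * (A 1 0 * A 2 1 * A 3 3 - A 1 0 * A 2 3 * A 3 1 - A 1 1 * A 2 0 * A 3 3
        + A 1 1 * A 2 3 * A 3 0 + A 1 3 * A 2 0 * A 3 1 - A 1 3 * A 2 1 * A 3 0)
      - A 0 3 * (A 1 0 * A 2 1 * A 3 2 - A 1 0 * A 2 2 * A 3 1 - A 1 1 * A 2 0 * A 3 2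
        + A 1 1 * A 2 2 * A 3 0 + A 1 2 * A 2 0 * A 3 1 - A 1 2 * A 2 1 * A 3 0) := by
  rw [Matrix.det_succ_row_zero]
  simp [Fin.sum_univ_succ, Matrix.det_fin_three, Matrix.submatrix_apply, Fin.succAbove,
    show (Fin.succ 2 : Fin 4) = 3 from rfl, show (Fin.succ 1 : Fin 4) = 2 from rfl,
    show (Fin.succ 0 : Fin 4) = 1 from rfl, show (Fin.castSucc 2 : Fin 4) = 2 from rfl,
    show (Fin.castSucc 1 : Fin 4) = 1 from rfl, show (Fin.castSucc 0 : Fin 4) = 0 from rfl]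
  ring

set_option maxHeartbeats 2000000 in
lemma gram_det (a b c d : ℝ) :
    (gramM a b c d).det = (a^2+b^2+c^2+d^2)^4 +
      (2*(d^4)^2 + 8*(c*d^3)^2 + 11*(c^2*d^2)^2 + 6*(c^3*d)^2 + (c^4)^2 + 8*(b*d^3)^2
       + 15*(b*c*d^2)^2 + 8*(b*c^2*d)^2 + (b*c^3)^2 + 11*(b^2*d^2)^2 + 8*(b^2*c*d)^2
       + 6*(b^3*d)^2 + (b^3*c)^2 + (b^4)^2 + 5*(a*d^3)^2 + 13*(a*c*d^2)^2
       + 10*(a*c^2*d)^2 + 2*(a*c^3)^2 + 13*(a*b*d^2)^2 + 15*(a*b*c*d)^2 + 2*(a*b*c^2)^2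
       + 10*(a*b^2*d)^2 + 2*(a*b^2*c)^2 + 2*(a*b^3)^2 + 4*(a^2*d^2)^2 + 5*(a^2*c*d)^2
       + (a^2*c^2)^2 + 5*(a^2*b*d)^2 + (a^2*b*c)^2 + (a^2*b^2)^2 + (a^3*d)^2) := by
  rw [det_fin_four']
  simp [gramM]
  ring

lemma gram_det_pos (a b c d : ℝ) (h : a ≠ 0 ∨ b ≠ 0 ∨ c ≠ 0 ∨ d ≠ 0) :
    0 < (gramM a b c d).det := by
  have hs : 0 < a ^ 2 + b ^ 2 + c ^ 2 + d ^ 2 := by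
    rcases h with h | h | h | h <;> positivity
  rw [gram_det]
  have h4 : 0 < (a^2+b^2+c^2+d^2)^4 := by positivity
  have hE : (0:ℝ) ≤
      2*(d^4)^2 + 8*(c*d^3)^2 + 11*(c^2*d^2)^2 + 6*(c^3*d)^2 + (c^4)^2 + 8*(b*d^3)^2
       + 15*(b*c*d^2)^2 + 8*(b*c^2*d)^2 + (b*c^3)^2 + 11*(b^2*d^2)^2 + 8*(b^2*c*d)^2
       + 6*(b^3*d)^2 + (b^3*c)^2 + (b^4)^2 + 5*(a*d^3)^2 + 13*(a*c*d^2)^2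
       + 10*(a*c^2*d)^2 + 2*(a*c^3)^2 + 13*(a*b*d^2)^2 + 15*(a*b*c*d)^2 + 2*(a*b*c^2)^2
       + 10*(a*b^2*d)^2 + 2*(a*b^2*c)^2 + 2*(a*b^3)^2 + 4*(a^2*d^2)^2 + 5*(a^2*c*d)^2
       + (a^2*c^2)^2 + 5*(a^2*b*d)^2 + (a^2*b*c)^2 + (a^2*b^2)^2 + (a^3*d)^2 := by
    positivity
  linarith

/-- The linearized compressible Euler operator has the constant rank property with r = 4:
the symbol 𝔸(w) = Σᵢ wᵢ A⁽ⁱ⁾ has rank exactly 4 for every nonzero w ∈ ℝ⁴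
(in particular for every unit vector). -/
theorem constant_rank_linearized_euler (w : Fin 4 → ℝ) (hw : w ≠ 0) :
    (∑ i : Fin 4, w i • AL i).rank = 4 := by
  have hne : w 0 ≠ 0 ∨ w 1 ≠ 0 ∨ w 2 ≠ 0 ∨ w 3 ≠ 0 := by
    by_contra h
    push_neg at h
    obtain ⟨h0, h1, h2, h3⟩ := h
    apply hw
    funext i
    fin_cases i <;> simpa using ‹_›
  have hdpos := gram_det_pos (w 0) (w 1) (w 2) (w 3) hne
  have hunit : IsUnit (gramM (w 0) (w 1) (w 2) (w 3)) := by
    rw [Matrix.isUnit_iff_isUnit_det]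
    exact isUnit_iff_ne_zero.mpr (ne_of_gt hdpos)
  rw [sum_AL_eq, ← Matrix.rank_self_mul_transpose, symbol_mul_transpose,
    Matrix.rank_of_isUnit _ hunit]
  simp
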